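/- arXiv:math/0512394 — 2 statements merged into one kernel-verified Lean document; each statement's English description precedes it below -/
import Mathlib

section
/- Let χ : (0,1) → (0,∞) with 1/χ convex, let m ∈ (0,1), and let ρ : T → (0,1) be a C¹ function on the one-dimensional torus with ∫₀¹ ρ(u) du = m. Then for any j ∈ ℝ, (1/2)∫₀¹ (j + (1/2)ρ'(u))²/χ(ρ(u)) du ≥ (1/2) j²/χ(m), with equality when ρ ≡ m. -/
open Set intervalIntegral MeasureTheory

/-- If `1/χ` is convex on `(0,1)` with `χ > 0` there, then for any `C¹` periodic profile
`ρ` with values in `(0,1)` and mean `m`, and any current value `j`,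
`(1/2)∫₀¹ (j + ρ'/2)²/χ(ρ) ≥ (1/2) j²/χ(m)`, with equality for the constant profile. -/
theorem jensen_current_lower_bound
    (χ : ℝ → ℝ) (m : ℝ) (hm : m ∈ Ioo (0:ℝ) 1)
    (hχpos : ∀ r ∈ Ioo (0:ℝ) 1, 0 < χ r)
    (hconv : ConvexOn ℝ (Ioo (0:ℝ) 1) (fun r => 1 / χ r))
    (ρ : ℝ → ℝ) (hρ : ContDiff ℝ 1 ρ)
    (hper : ∀ u, ρ (u + 1) = ρ u)
    (hρ01 : ∀ u, ρ u ∈ Ioo (0:ℝ) 1)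
    (hmass : (∫ u in (0:ℝ)..1, ρ u) = m)
    (j : ℝ) :
    (1/2) * (∫ u in (0:ℝ)..1, (j + deriv ρ u / 2)^2 / χ (ρ u)) ≥ (1/2) * j^2 / χ m ∧
    ((∀ u, ρ u = m) →
      (1/2) * (∫ u in (0:ℝ)..1, (j + deriv ρ u / 2)^2 / χ (ρ u)) = (1/2) * j^2 / χ m) := by
  have hχm : 0 < χ m := hχpos m hm
  constructor
  · -- main inequality
    set g : ℝ → ℝ := fun r => 1 / χ r with hg_def
    have hρc : Continuous ρ := hρ.continuous
    have hd : Continuous (deriv ρ) := hρ.continuous_deriv le_rfl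
    have hgc : ContinuousOn g (Ioo (0:ℝ) 1) := hconv.continuousOn isOpen_Ioo
    have hgρ : Continuous (fun u => g (ρ u)) :=
      hgc.comp_continuous hρc (fun u => hρ01 u)
    have hgρ_pos : ∀ u, 0 < g (ρ u) := fun u =>
      one_div_pos.2 (hχpos _ (hρ01 u))
    -- rewrite integrand
    have hint : ∀ u, (j + deriv ρ u / 2)^2 / χ (ρ u)
        = j^2 * g (ρ u) + j * (deriv ρ u * g (ρ u))
          + (deriv ρ u)^2 / 4 * g (ρ u) := by
      intro u
      have : (j + deriv ρ u / 2)^2 = j^2 + j * deriv ρ u + (deriv ρ u)^2 / 4 := by ring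
      rw [div_eq_mul_one_div, this]; ring
    -- integrability
    have int1 : IntervalIntegrable (fun u => j^2 * g (ρ u)) volume 0 1 :=
      (continuous_const.mul hgρ).intervalIntegrable _ _
    have int2 : IntervalIntegrable (fun u => j * (deriv ρ u * g (ρ u))) volume 0 1 :=
      (continuous_const.mul (hd.mul hgρ)).intervalIntegrable _ _
    have int3 : IntervalIntegrable (fun u => (deriv ρ u)^2 / 4 * g (ρ u)) volume 0 1 :=
      (((hd.pow 2).div_const 4).mul hgρ).intervalIntegrable _ _
    have split : (∫ u in (0:ℝ)..1, (j + deriv ρ u / 2)^2 / χ (ρ u))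
        = (∫ u in (0:ℝ)..1, j^2 * g (ρ u))
          + (∫ u in (0:ℝ)..1, j * (deriv ρ u * g (ρ u)))
          + (∫ u in (0:ℝ)..1, (deriv ρ u)^2 / 4 * g (ρ u)) := by
      rw [← intervalIntegral.integral_add int1 int2,
        ← intervalIntegral.integral_add (int1.add int2) int3]
      simp only [hint]
    -- cross term vanishes
    have cross : (∫ u in (0:ℝ)..1, deriv ρ u * g (ρ u)) = 0 := by
      have h1 : ∀ x ∈ uIcc (0:ℝ) 1, HasDerivAt ρ (deriv ρ x) x := fun x _ =>
        (hρ.differentiable one_ne_zero x).hasDerivAt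
      have h2 : ContinuousOn (deriv ρ) (uIcc (0:ℝ) 1) := hd.continuousOn
      have h3 : ContinuousOn g (ρ '' uIcc (0:ℝ) 1) :=
        hgc.mono (by rintro _ ⟨u, _, rfl⟩; exact hρ01 u)
      have := intervalIntegral.integral_comp_smul_deriv' h1 h2 h3
      simp only [smul_eq_mul, Function.comp] at this
      rw [this]
      have : ρ 1 = ρ 0 := by simpa using hper 0
      rw [this, intervalIntegral.integral_same]
    -- Jensen
    have jensen : g m ≤ ∫ u in (0:ℝ)..1, g (ρ u) := by
      set μ : Measure ℝ := volume.restrict (Ioc (0:ℝ) 1) with hμ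
      have hμuniv : μ univ = 1 := by
        simp [hμ, Real.volume_Ioc]
      haveI : IsFiniteMeasure μ := ⟨by rw [hμuniv]; exact ENNReal.one_lt_top⟩
      haveI : NeZero μ := ⟨by intro h; simp [h] at hμuniv⟩
      -- compact range
      have hK : IsCompact (ρ '' Icc (0:ℝ) 1) := (isCompact_Icc).image hρc
      have hKne : (ρ '' Icc (0:ℝ) 1).Nonempty := ⟨ρ 0, mem_image_of_mem _ (by norm_num)⟩
      set a := sInf (ρ '' Icc (0:ℝ) 1)
      set b := sSup (ρ '' Icc (0:ℝ) 1)
      have haK : a ∈ ρ '' Icc (0:ℝ) 1 := hK.sInf_mem hKne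
      have hbK : b ∈ ρ '' Icc (0:ℝ) 1 := hK.sSup_mem hKne
      obtain ⟨ua, -, hua⟩ := haK
      obtain ⟨ub, -, hub⟩ := hbK
      have ha01 : a ∈ Ioo (0:ℝ) 1 := hua ▸ hρ01 ua
      have hb01 : b ∈ Ioo (0:ℝ) 1 := hub ▸ hρ01 ub
      have hsub : Icc a b ⊆ Ioo (0:ℝ) 1 := fun x hx =>
        ⟨lt_of_lt_of_le ha01.1 hx.1, lt_of_le_of_lt hx.2 hb01.2⟩
      have hmemab : ∀ u ∈ Icc (0:ℝ) 1, ρ u ∈ Icc a b := fun u hu =>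
        ⟨csInf_le hK.bddBelow (mem_image_of_mem _ hu),
         le_csSup hK.bddAbove (mem_image_of_mem _ hu)⟩
      have hconv' : ConvexOn ℝ (Icc a b) g := hconv.subset hsub (convex_Icc a b)
      have hgc' : ContinuousOn g (Icc a b) := hgc.mono hsub
      have hfs : ∀ᵐ x ∂μ, ρ x ∈ Icc a b := by
        rw [hμ, ae_restrict_iff' measurableSet_Ioc]
        exact ae_of_all _ fun x hx => hmemab x ⟨hx.1.le, hx.2⟩
      have hfi : Integrable ρ μ := hρc.integrableOn_Ioc
      have hgi : Integrable (g ∘ ρ) μ := hgρ.integrableOn_Ioc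
      have hJ := hconv'.map_average_le hgc' isClosed_Icc hfs hfi hgi
      have havg : ∀ (f : ℝ → ℝ), (⨍ x, f x ∂μ) = ∫ x, f x ∂μ := by
        intro f
        rw [average_eq, measureReal_def, hμuniv]; simp
      rw [havg, havg] at hJ
      have hμρ : (∫ x, ρ x ∂μ) = m := by
        rw [← hmass, intervalIntegral.integral_of_le (by norm_num : (0:ℝ) ≤ 1)]
      rw [hμρ] at hJ
      calc g m ≤ ∫ x, g (ρ x) ∂μ := hJ
        _ = ∫ u in (0:ℝ)..1, g (ρ u) := by
            rw [intervalIntegral.integral_of_le (by norm_num : (0:ℝ) ≤ 1)]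
    -- third term nonneg
    have third : 0 ≤ ∫ u in (0:ℝ)..1, (deriv ρ u)^2 / 4 * g (ρ u) :=
      intervalIntegral.integral_nonneg (by norm_num) fun u _ =>
        mul_nonneg (by positivity) (hgρ_pos u).le
    have first : j^2 * g m ≤ ∫ u in (0:ℝ)..1, j^2 * g (ρ u) := by
      rw [intervalIntegral.integral_const_mul]
      exact mul_le_mul_of_nonneg_left jensen (sq_nonneg j)
    have second : (∫ u in (0:ℝ)..1, j * (deriv ρ u * g (ρ u))) = 0 := by
      rw [intervalIntegral.integral_const_mul, cross, mul_zero]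
    have key : j^2 * g m ≤ ∫ u in (0:ℝ)..1, (j + deriv ρ u / 2)^2 / χ (ρ u) := by
      rw [split, second, add_zero]
      linarith
    have : (1/2 : ℝ) * j^2 / χ m = (1/2) * (j^2 * g m) := by
      simp only [hg_def]; field_simp
    rw [ge_iff_le, this]
    linarith
  · -- equality for constant profile
    intro hconst
    have hρ_eq : ρ = fun _ => m := funext hconst
    have hderiv : ∀ u, deriv ρ u = 0 := by
      intro u; rw [hρ_eq]; exact deriv_const u m
    have : (∫ u in (0:ℝ)..1, (j + deriv ρ u / 2)^2 / χ (ρ u))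
        = ∫ u in (0:ℝ)..1, (j^2 / χ m : ℝ) := by
      congr 1; funext u; rw [hderiv u, hconst u]; ring_nf
    rw [this, intervalIntegral.integral_const]
    simp; ring
end

section
/- Let K(ρ) denote, for a C¹ periodic profile ρ : T → (0,1) with mean m and for λ, J ∈ ℝ, the quantity (1/2)∫₀¹ [J²(1 + λ(ρ(u)−m))² + (1/4)ρ'(u)²]/(ρ(u)(1−ρ(u))) du. If χ(r) = r(1−r) then for every non-constant such ρ and λ = χ'(m)/χ(m), K(ρ) as a function of J² has leading coefficient (1/2)∫₀¹ (1+λ(ρ−m))²/χ(ρ) du which satisfies (1/2)∫₀¹ (1+λ(ρ−m))²/χ(ρ) du ≥ 1/(2χ(m)), since χ''(m) = −2 < 0. -/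
open Set

/-- Pointwise convexity bound: for `r ∈ (0,1)`, the function
`F(r) = (1+λ(r−m))²/(r(1−r))` lies above its tangent line at `m`. -/
lemma ssep_pointwise (m : ℝ) (hm : m ∈ Ioo (0:ℝ) 1) (r : ℝ) (hr : r ∈ Ioo (0:ℝ) 1)
    (lam : ℝ) (hlam : lam = (1 - 2*m) / (m * (1 - m))) :
    (1 + lam * (r - m))^2 / (r * (1 - r)) ≥
      1 / (m * (1 - m)) + (1 - 2*m) / (m * (1 - m))^2 * (r - m) := by
  obtain ⟨hm0, hm1⟩ := hm
  obtain ⟨hr0, hr1⟩ := hr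
  have ha : (0:ℝ) < m * (1 - m) := by nlinarith
  have hb : (0:ℝ) < r * (1 - r) := by nlinarith
  set a := m * (1 - m) with ha_def
  set b := r * (1 - r) with hb_def
  have hs : a + (1 - 2*m) * (r - m) = (r - m)^2 + b := by
    simp only [ha_def, hb_def]; ring
  have hspos : 0 < a + (1 - 2*m) * (r - m) := by
    rw [hs]; positivity
  set s := a + (1 - 2*m) * (r - m) with hs_def
  have h1 : (1 + lam * (r - m))^2 / b = s^2 / (a^2 * b) := by
    rw [hlam, hs_def]
    field_simp
    try ring
  have h2 : s^2 / (a^2 * b) = 1 / a + (1 - 2*m) / a^2 * (r - m) + s * (r - m)^2 / (a^2 * b) := by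
    have hsq : s^2 = s * b + s * (r - m)^2 := by rw [hs]; ring
    rw [hsq, hs_def]
    field_simp
  rw [h1, h2]
  have : 0 ≤ s * (r - m)^2 / (a^2 * b) := by positivity
  linarith

/-- For the symmetric simple exclusion mobility `χ(r) = r(1−r)` and the traveling-wave
parameter `λ = χ'(m)/χ(m)`, the leading coefficient (in `J²`) of the traveling-wave cost of
any non-constant `C¹` periodic profile with mean `m` is at least `1/(2χ(m))`: no traveling
wave improves on the constant profile. -/
theorem ssep_no_dynamical_phase_transition
    (m : ℝ) (hm : m ∈ Ioo (0:ℝ) 1)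
    (ρ : ℝ → ℝ) (hρ : ContDiff ℝ 1 ρ)
    (hper : ∀ u, ρ (u + 1) = ρ u)
    (hρ01 : ∀ u, ρ u ∈ Ioo (0:ℝ) 1)
    (hmass : (∫ u in (0:ℝ)..1, ρ u) = m)
    (hnc : ∃ u v, ρ u ≠ ρ v)
    (lam : ℝ) (hlam : lam = deriv (fun r : ℝ => r * (1 - r)) m / (m * (1 - m))) :
    (1/2) * (∫ u in (0:ℝ)..1, (1 + lam * (ρ u - m))^2 / (ρ u * (1 - ρ u))) ≥
      1 / (2 * (m * (1 - m))) := by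
  have hd : deriv (fun r : ℝ => r * (1 - r)) m = 1 - 2*m := by
    have h : HasDerivAt (fun r : ℝ => r * (1 - r)) (1 - 2*m) m := by
      have h : HasDerivAt (fun r : ℝ => r * (1 - r)) (1 * (1 - m) + m * (0 - 1)) m := (hasDerivAt_id m).mul ((hasDerivAt_const m (1:ℝ)).sub (hasDerivAt_id m))
      convert h using 1; ring
    exact h.deriv
  rw [hd] at hlam
  have hρc : Continuous ρ := hρ.continuous
  set c : ℝ := (1 - 2*m) / (m * (1 - m))^2 with hc_def
  -- continuity of the integrand
  have hcont : Continuous fun u => (1 + lam * (ρ u - m))^2 / (ρ u * (1 - ρ u)) := by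
    apply Continuous.div
    · fun_prop
    · fun_prop
    · intro u
      obtain ⟨h0, h1⟩ := hρ01 u
      nlinarith
  have hint1 : IntervalIntegrable (fun u => (1 + lam * (ρ u - m))^2 / (ρ u * (1 - ρ u)))
      MeasureTheory.volume 0 1 := hcont.intervalIntegrable 0 1
  have hint2 : IntervalIntegrable (fun u => 1 / (m * (1 - m)) + c * (ρ u - m))
      MeasureTheory.volume 0 1 := by
    apply Continuous.intervalIntegrable; fun_prop
  have hmono : (∫ u in (0:ℝ)..1, (1 / (m * (1 - m)) + c * (ρ u - m))) ≤
      ∫ u in (0:ℝ)..1, (1 + lam * (ρ u - m))^2 / (ρ u * (1 - ρ u)) := by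
    apply intervalIntegral.integral_mono_on (by norm_num) hint2 hint1
    intro u _
    exact ssep_pointwise m hm (ρ u) (hρ01 u) lam hlam
  have hval : (∫ u in (0:ℝ)..1, (1 / (m * (1 - m)) + c * (ρ u - m))) = 1 / (m * (1 - m)) := by
    have hiρ : IntervalIntegrable ρ MeasureTheory.volume 0 1 := hρc.intervalIntegrable 0 1
    have hiρm : IntervalIntegrable (fun u => ρ u - m) MeasureTheory.volume 0 1 :=
      hiρ.sub (intervalIntegrable_const)
    rw [intervalIntegral.integral_add (intervalIntegrable_const) (hiρm.const_mul c),
      intervalIntegral.integral_const_mul,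
      intervalIntegral.integral_sub hiρ intervalIntegrable_const, hmass]
    simp
  have key : 1 / (2 * (m * (1 - m))) = (1 / (m * (1 - m))) / 2 := by rw [div_div, mul_comm (m*(1-m)) 2]
  rw [key]
  linarith
end
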